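/- For every n ≥ 3, the Godowski equation n-Go holds in every ortholattice admitting a strong set of states: for all a₁, …, aₙ, a₁ ≡γ aₙ = aₙ ≡γ a₁. -/

import Mathlib

/-- An ortholattice: a bounded lattice with an orthocomplementation. -/
class Ortholattice (α : Type*) extends Lattice α, BoundedOrder α, Compl α where
  compl_compl : ∀ a : α, aᶜᶜ = a
  compl_le_compl : ∀ a b : α, a ≤ b → bᶜ ≤ aᶜ
  inf_compl_self : ∀ a : α, a ⊓ aᶜ = ⊥
  sup_compl_self : ∀ a : α, a ⊔ aᶜ = ⊤

/-- The Sasaki hook `a → b := a' ⊔ (a ⊓ b)`. -/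
def sasaki {α : Type*} [Ortholattice α] (a b : α) : α := aᶜ ⊔ (a ⊓ b)

/-- A state (probability measure) on an ortholattice. -/
def IsState {α : Type*} [Ortholattice α] (m : α → ℝ) : Prop :=
  (∀ a : α, 0 ≤ m a ∧ m a ≤ 1) ∧ m ⊤ = 1 ∧
    ∀ a b : α, a ≤ bᶜ → m (a ⊔ b) = m a + m b

/-- The Godowski identity `a₁ ≡γ aₙ = (a₁→a₂) ⊓ ⋯ ⊓ (aₙ₋₁→aₙ) ⊓ (aₙ→a₁)`,
as the meet over the forward cycle. -/
def goFwd {α : Type*} [Ortholattice α] (n : ℕ) (hn : 3 ≤ n) (a : Fin n → α) : α :=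
  Finset.univ.inf fun i : Fin n => sasaki (a i) (a (i + ⟨1, by omega⟩))

/-- The Godowski identity `aₙ ≡γ a₁ = (aₙ→aₙ₋₁) ⊓ ⋯ ⊓ (a₂→a₁) ⊓ (a₁→aₙ)`,
as the meet over the backward cycle. -/
def goBwd {α : Type*} [Ortholattice α] (n : ℕ) (hn : 3 ≤ n) (a : Fin n → α) : α :=
  Finset.univ.inf fun i : Fin n => sasaki (a (i + ⟨1, by omega⟩)) (a i)

section Aux
variable {α : Type*} [Ortholattice α]

lemma state_compl {m : α → ℝ} (hm : IsState m) (a : α) : m aᶜ = 1 - m a := by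
  have h := hm.2.2 a aᶜ (by rw [Ortholattice.compl_compl])
  rw [Ortholattice.sup_compl_self, hm.2.1] at h
  linarith

lemma state_mono {m : α → ℝ} (hm : IsState m) {a b : α} (h : a ≤ b) : m a ≤ m b := by
  have h1 := hm.2.2 a bᶜ (by rw [Ortholattice.compl_compl]; exact h)
  have h2 := (hm.1 (a ⊔ bᶜ)).2
  rw [state_compl hm] at h1
  linarith

lemma state_sasaki {m : α → ℝ} (hm : IsState m) (a b : α) :
    m (sasaki a b) = 1 - m a + m (a ⊓ b) := by
  have h := hm.2.2 aᶜ (a ⊓ b)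
    (Ortholattice.compl_le_compl (a ⊓ b) a inf_le_left)
  unfold sasaki
  rw [h, state_compl hm]

lemma one_mk (n : ℕ) (hn : 3 ≤ n) [NeZero n] : (⟨1, by omega⟩ : Fin n) = 1 := by
  apply Fin.val_injective
  show 1 = (1 : Fin n).val
  rw [Fin.val_one', Nat.mod_eq_of_lt (by omega)]

lemma goFwd_eq (n : ℕ) (hn : 3 ≤ n) (a : Fin n → α) :
    haveI : NeZero n := ⟨by omega⟩
    goFwd n hn a = Finset.univ.inf fun i : Fin n => sasaki (a i) (a (i + 1)) := by
  haveI : NeZero n := ⟨by omega⟩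
  rw [goFwd, one_mk n hn]

lemma goBwd_eq (n : ℕ) (hn : 3 ≤ n) (a : Fin n → α) :
    haveI : NeZero n := ⟨by omega⟩
    goBwd n hn a = Finset.univ.inf fun i : Fin n => sasaki (a (i + 1)) (a i) := by
  haveI : NeZero n := ⟨by omega⟩
  rw [goBwd, one_mk n hn]

open Fin.CommRing in
lemma fwd_le_bwd (S : Set (α → ℝ)) (hS : ∀ m ∈ S, IsState m)
    (hstrong : ∀ a b : α, ∃ m ∈ S, ((m a = 1 → m b = 1) → a ≤ b))
    (n : ℕ) (hn : 3 ≤ n) (a : Fin n → α) :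
    goFwd n hn a ≤ goBwd n hn a := by
  haveI : NeZero n := ⟨by omega⟩
  rw [goBwd_eq n hn a]
  refine Finset.le_inf fun i _ => ?_
  obtain ⟨m, hmS, hm⟩ := hstrong (goFwd n hn a) (sasaki (a (i + 1)) (a i))
  have hstate := hS m hmS
  refine hm fun h1 => ?_
  have hterm : ∀ j : Fin n, m (a j ⊓ a (j + 1)) = m (a j) := by
    intro j
    have hle : goFwd n hn a ≤ sasaki (a j) (a (j + 1)) := by
      rw [goFwd_eq n hn a]
      exact Finset.inf_le (Finset.mem_univ j)
    have h2 := state_mono hstate hle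
    have h3 := (hstate.1 (sasaki (a j) (a (j + 1)))).2
    have h4 := state_sasaki hstate (a j) (a (j + 1))
    linarith
  have hstep : ∀ j : Fin n, m (a j) ≤ m (a (j + 1)) := by
    intro j
    have := state_mono hstate (inf_le_right : a j ⊓ a (j + 1) ≤ a (j + 1))
    linarith [hterm j]
  have hconst : ∀ j k : Fin n, m (a j) ≤ m (a k) := by
    intro j k
    have hnat : ∀ t : ℕ, m (a j) ≤ m (a (j + (t : Fin n))) := by
      intro t
      induction t with
      | zero => simp
      | succ t ih =>
        have hc : ((t + 1 : ℕ) : Fin n) = (t : Fin n) + 1 := by push_cast; ring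
        rw [hc, ← add_assoc]
        exact le_trans ih (hstep _)
    have h5 := hnat (k - j).val
    have h6 : j + ((k - j).val : Fin n) = k := by
      rw [Fin.cast_val_eq_self]; ring
    rwa [h6] at h5
  have heq : m (a i) = m (a (i + 1)) := le_antisymm (hstep i) (hconst _ _)
  rw [state_sasaki hstate, inf_comm, hterm i, heq]
  ring

end Aux


/-- For every `n ≥ 3`, the Godowski equation n-Go, `a₁ ≡γ aₙ = aₙ ≡γ a₁`, holds
in every ortholattice admitting a strong set of states. -/
theorem stmt_8 {α : Type*} [Ortholattice α] (S : Set (α → ℝ))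
    (hne : S.Nonempty) (hS : ∀ m ∈ S, IsState m)
    (hstrong : ∀ a b : α, ∃ m ∈ S, ((m a = 1 → m b = 1) → a ≤ b))
    (n : ℕ) (hn : 3 ≤ n) (a : Fin n → α) :
    goFwd n hn a = goBwd n hn a := by
  haveI : NeZero n := ⟨by omega⟩
  set b : Fin n → α := fun j => a (-j) with hb
  have reindex : ∀ f : Fin n → α, Finset.univ.inf f =
      Finset.univ.inf (fun j => f ((Equiv.subLeft (-1 : Fin n)) j)) := by
    intro f
    conv_lhs => rw [← Finset.map_univ_equiv (Equiv.subLeft (-1 : Fin n))]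
    rw [Finset.inf_map]
    rfl
  have h1 : goBwd n hn a = goFwd n hn b := by
    rw [goBwd_eq n hn a, goFwd_eq n hn b,
      reindex (fun i => sasaki (a (i + 1)) (a i))]
    apply Finset.inf_congr rfl
    intro j _
    simp only [Equiv.subLeft_apply, hb]
    congr 1 <;> congr 1 <;> (open Fin.CommRing in ring)
  have h2 : goFwd n hn a = goBwd n hn b := by
    rw [goFwd_eq n hn a, goBwd_eq n hn b,
      reindex (fun i => sasaki (a i) (a (i + 1)))]
    apply Finset.inf_congr rfl
    intro j _
    simp only [Equiv.subLeft_apply, hb]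
    congr 1 <;> congr 1 <;> (open Fin.CommRing in ring)
  exact le_antisymm (fwd_le_bwd S hS hstrong n hn a)
    (by rw [h1, h2]; exact fwd_le_bwd S hS hstrong n hn b)
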